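/- Let [n] = I ∪ J be a partition into disjoint sets and W ⊆ ℝⁿ a linear subspace. For every x ∈ ℝ^I, the linear system 'w ∈ W, w_I ∈ (π_I(W))⊥ + x, w_J ∈ π_J(W⊥)' has a unique solution w ∈ ℝⁿ, and this solution equals L_I^W(x), the minimum-norm element of {w ∈ W : w_I = Π_{π_I(W)}(x)}. Moreover, x ↦ L_I^W(x) and x ↦ ℓ_I^W(x) = (L_I^W(x))_J are linear maps, and (π_I(W))⊥ ⊆ ker(L_I^W). -/

import Mathlib

open scoped RealInnerProductSpace

/-- The coordinate projection `π_I : ℝⁿ → ℝ^I` as a linear map. -/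
noncomputable def coordRestrict {n : ℕ} (I : Finset (Fin n)) :
    EuclideanSpace ℝ (Fin n) →ₗ[ℝ] EuclideanSpace ℝ {i : Fin n // i ∈ I} where
  toFun x := WithLp.toLp 2 (fun i => x i.1)
  map_add' _ _ := rfl
  map_smul' _ _ := rfl

lemma coordRestrict_apply {n : ℕ} (I : Finset (Fin n)) (x : EuclideanSpace ℝ (Fin n))
    (i : {i : Fin n // i ∈ I}) : coordRestrict I x i = x i.1 := rfl

lemma mem_ker_coordRestrict {n : ℕ} (I : Finset (Fin n)) (x : EuclideanSpace ℝ (Fin n)) :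
    x ∈ LinearMap.ker (coordRestrict I) ↔ ∀ i ∈ I, x i = 0 := by
  constructor
  · intro h i hi
    exact congrArg (fun f : EuclideanSpace ℝ {i : Fin n // i ∈ I} => f ⟨i, hi⟩) (LinearMap.mem_ker.mp h)
  · intro h
    exact LinearMap.mem_ker.mpr (PiLp.ext fun i => h i.1 i.2)

/-- Splitting of the inner product over `I` and `J`. -/
lemma inner_split {n : ℕ} (I J : Finset (Fin n))
    (hIJ : I ∪ J = Finset.univ) (hdisj : Disjoint I J)
    (w v u : EuclideanSpace ℝ (Fin n))
    (hu : ∀ i ∈ I, u i = 0) (hwv : ∀ j ∈ J, w j = v j) :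
    ⟪w, u⟫ = ⟪v, u⟫ := by
  rw [PiLp.inner_apply, PiLp.inner_apply]
  rw [show (Finset.univ : Finset (Fin n)) = I ∪ J from hIJ.symm]
  rw [Finset.sum_union hdisj, Finset.sum_union hdisj]
  congr 1
  · refine Finset.sum_congr rfl fun i hi => by simp [hu i hi]
  · refine Finset.sum_congr rfl fun j hj => by simp [hwv j hj]

lemma ker_orth_le_ker {n : ℕ} (I J : Finset (Fin n)) (hdisj : Disjoint I J) :
    (LinearMap.ker (coordRestrict (n := n) I))ᗮ ≤ LinearMap.ker (coordRestrict (n := n) J) := by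
  intro s hs
  have : ∀ j : {i : Fin n // i ∈ J}, s j.1 = 0 := by
    intro j
    have hjI : j.1 ∉ I := fun h => (Finset.disjoint_left.mp hdisj) h j.2
    have hmem : (EuclideanSpace.single j.1 (1:ℝ)) ∈ LinearMap.ker (coordRestrict I) := by
      rw [mem_ker_coordRestrict]
      intro i hi
      have : i ≠ j.1 := fun h => hjI (h ▸ hi)
      simp [EuclideanSpace.single_apply, this]
    have := hs _ hmem
    rwa [EuclideanSpace.inner_single_left, map_one, one_mul] at this
  exact LinearMap.mem_ker.mpr (PiLp.ext fun j => this j)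

set_option maxHeartbeats 1000000 in
theorem statement6 (n : ℕ) (I J : Finset (Fin n))
    (hIJ : I ∪ J = Finset.univ) (hdisj : Disjoint I J)
    (W : Submodule ℝ (EuclideanSpace ℝ (Fin n))) :
    ∃ L : EuclideanSpace ℝ {i : Fin n // i ∈ I} →ₗ[ℝ] EuclideanSpace ℝ (Fin n),
      -- `L x` solves the linear system: `L x ∈ W`, `(L x)_I ∈ (π_I W)ᗮ + x`,
      -- `(L x)_J ∈ π_J (Wᗮ)`
      (∀ x, L x ∈ W ∧ coordRestrict I (L x) - x ∈ (W.map (coordRestrict I))ᗮ ∧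
        coordRestrict J (L x) ∈ Wᗮ.map (coordRestrict J)) ∧
      -- the solution of the linear system is unique
      (∀ x w, w ∈ W → coordRestrict I w - x ∈ (W.map (coordRestrict I))ᗮ →
        coordRestrict J w ∈ Wᗮ.map (coordRestrict J) → w = L x) ∧
      -- `L x` is the minimum-norm element of `{w ∈ W : w_I = Π_{π_I(W)}(x)}`
      (∀ x w, w ∈ W → coordRestrict I w - x ∈ (W.map (coordRestrict I))ᗮ → ‖L x‖ ≤ ‖w‖) ∧
      (∀ x w, w ∈ W → coordRestrict I w - x ∈ (W.map (coordRestrict I))ᗮ →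
        ‖w‖ ≤ ‖L x‖ → w = L x) ∧
      -- `(π_I W)ᗮ ⊆ ker L`
      (∀ x ∈ (W.map (coordRestrict I))ᗮ, L x = 0) := by
  classical
  set πI := coordRestrict (n := n) I with hπI
  set πJ := coordRestrict (n := n) J with hπJ
  set U : Submodule ℝ (EuclideanSpace ℝ (Fin n)) := W ⊓ LinearMap.ker πI with hU
  set P : Submodule ℝ (EuclideanSpace ℝ {i : Fin n // i ∈ I}) := W.map πI with hP
  set K : Submodule ℝ (EuclideanSpace ℝ (Fin n)) := W ⊓ Uᗮ with hK
  -- the orthogonal complement of U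
  have hUorth : Uᗮ = Wᗮ ⊔ (LinearMap.ker πI)ᗮ := by
    have h1 : (Wᗮ ⊔ (LinearMap.ker πI)ᗮ)ᗮ = U := by
      rw [← Submodule.inf_orthogonal, Submodule.orthogonal_orthogonal,
        Submodule.orthogonal_orthogonal]
    rw [← h1, Submodule.orthogonal_orthogonal]
  -- injectivity of πI on K
  have hKinj : ∀ k ∈ K, πI k = 0 → k = 0 := by
    intro k hk hk0
    have hkU : k ∈ U := ⟨hk.1, hk0⟩
    have : ⟪k, k⟫ = 0 := hk.2 k hkU
    exact inner_self_eq_zero.mp this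
  -- the restricted map
  have hrange : ∀ k : K, πI (k : EuclideanSpace ℝ (Fin n)) ∈ P := fun k => ⟨k, k.2.1, rfl⟩
  set g : K →ₗ[ℝ] P := (πI.comp K.subtype).codRestrict P hrange with hg
  have hginj : Function.Injective g := by
    intro a b h
    have h' : πI ((a : EuclideanSpace ℝ (Fin n)) - b) = 0 := by
      rw [map_sub]
      have := congrArg Subtype.val h
      simp only [hg, LinearMap.codRestrict_apply, LinearMap.comp_apply,
        Submodule.subtype_apply] at this
      exact sub_eq_zero.mpr this
    have := hKinj _ (K.sub_mem a.2 b.2) h'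
    exact Subtype.ext (sub_eq_zero.mp this)
  have hgsurj : Function.Surjective g := by
    rintro ⟨p, w, hwW, hwp⟩
    have hsup : U ⊔ (Uᗮ ⊓ W) = W :=
      Submodule.sup_orthogonal_inf_of_hasOrthogonalProjection (inf_le_left : U ≤ W)
    have hw' : w ∈ U ⊔ (Uᗮ ⊓ W) := by rw [hsup]; exact hwW
    obtain ⟨u, hu, k, hk, huk⟩ := Submodule.mem_sup.mp hw'
    refine ⟨⟨k, hk.2, hk.1⟩, ?_⟩
    apply Subtype.ext
    simp only [hg, LinearMap.codRestrict_apply, LinearMap.comp_apply, Submodule.subtype_apply]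
    have : πI w = πI u + πI k := by rw [← map_add, huk]
    rw [hu.2] at this
    rw [← hwp, this, zero_add]
    rfl
  set e : K ≃ₗ[ℝ] P := LinearEquiv.ofBijective g ⟨hginj, hgsurj⟩ with he
  set L : EuclideanSpace ℝ {i : Fin n // i ∈ I} →ₗ[ℝ] EuclideanSpace ℝ (Fin n) :=
    K.subtype ∘ₗ (e.symm : P →ₗ[ℝ] K) ∘ₗ (P.orthogonalProjectionOnto).toLinearMap with hL
  have hLK : ∀ x, L x ∈ K := fun x => (e.symm (P.orthogonalProjectionOnto x)).2
  have hπIL : ∀ x, πI (L x) = (P.orthogonalProjectionOnto x : EuclideanSpace ℝ {i : Fin n // i ∈ I}) := by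
    intro x
    have := congrArg Subtype.val (e.apply_symm_apply (P.orthogonalProjectionOnto x))
    exact this
  -- the projection characterization
  have hproj : ∀ (x : EuclideanSpace ℝ {i : Fin n // i ∈ I}) (w : EuclideanSpace ℝ (Fin n)),
      w ∈ W → πI w - x ∈ Pᗮ →
      (P.orthogonalProjectionOnto x : EuclideanSpace ℝ {i : Fin n // i ∈ I}) = πI w := by
    intro x w hwW hwx
    exact Submodule.eq_starProjection_of_mem_orthogonal (K := P) ⟨w, hwW, rfl⟩
      (by rw [show x - πI w = -(πI w - x) by abel]; exact Pᗮ.neg_mem hwx)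
  -- uniqueness within K
  have huniqK : ∀ (x : EuclideanSpace ℝ {i : Fin n // i ∈ I}) (w : EuclideanSpace ℝ (Fin n)),
      w ∈ K → πI w - x ∈ Pᗮ → w = L x := by
    intro x w hwK hwx
    have h1 : (P.orthogonalProjectionOnto x : EuclideanSpace ℝ {i : Fin n // i ∈ I}) = πI w :=
      hproj x w hwK.1 hwx
    have h2 : g ⟨w, hwK⟩ = g (e.symm (P.orthogonalProjectionOnto x)) := by
      apply Subtype.ext
      show πI w = πI (L x)
      rw [hπIL x, h1]
    exact congrArg Subtype.val (hginj h2)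
  -- membership in K implies the J-condition
  have hKJ : ∀ w ∈ Uᗮ, πJ w ∈ Wᗮ.map πJ := by
    intro w hw
    rw [hUorth] at hw
    obtain ⟨v, hv, s, hs, hvs⟩ := Submodule.mem_sup.mp hw
    have hsJ : πJ s = 0 := ker_orth_le_ker I J hdisj hs
    exact ⟨v, hv, by rw [← hvs, map_add, hsJ, add_zero]⟩
  -- first bullet
  have hmain : ∀ x, L x ∈ W ∧ πI (L x) - x ∈ Pᗮ ∧ πJ (L x) ∈ Wᗮ.map πJ := by
    intro x
    refine ⟨(hLK x).1, ?_, hKJ _ (hLK x).2⟩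
    rw [hπIL x]
    have := Submodule.sub_starProjection_mem_orthogonal (K := P) x
    rw [show (P.orthogonalProjectionOnto x : EuclideanSpace ℝ {i : Fin n // i ∈ I}) - x
      = -(x - P.orthogonalProjectionOnto x) by abel]
    exact Pᗮ.neg_mem this
  -- uniqueness
  have huniq : ∀ x w, w ∈ W → πI w - x ∈ Pᗮ → πJ w ∈ Wᗮ.map πJ → w = L x := by
    intro x w hwW hwx hwJ
    obtain ⟨v, hv, hvJ⟩ := hwJ
    have hwU : w ∈ Uᗮ := by
      rw [Submodule.mem_orthogonal]
      intro u hu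
      have huI : ∀ i ∈ I, u i = 0 := (mem_ker_coordRestrict I u).mp hu.2
      have hwv : ∀ j ∈ J, w j = v j := by
        intro j hj
        exact (congrArg (fun f : EuclideanSpace ℝ {i : Fin n // i ∈ J} => f ⟨j, hj⟩) hvJ).symm
      have h1 : ⟪w, u⟫ = ⟪v, u⟫ := inner_split I J hIJ hdisj w v u huI hwv
      have h2 : ⟪v, u⟫ = 0 := by
        rw [real_inner_comm]
        exact hv u hu.1
      rw [real_inner_comm, h1, h2]
    exact huniqK x w ⟨hwW, hwU⟩ hwx
  -- min-norm: orthogonal decomposition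
  have hdecomp : ∀ x w, w ∈ W → πI w - x ∈ Pᗮ →
      ‖w‖ ^ 2 = ‖L x‖ ^ 2 + ‖w - L x‖ ^ 2 := by
    intro x w hwW hwx
    have h1 : (P.orthogonalProjectionOnto x : EuclideanSpace ℝ {i : Fin n // i ∈ I}) = πI w :=
      hproj x w hwW hwx
    have h2 : w - L x ∈ U := by
      refine ⟨W.sub_mem hwW (hLK x).1, ?_⟩
      show πI (w - L x) = 0
      rw [map_sub, hπIL x, h1, sub_self]
    have h3 : ⟪L x, w - L x⟫ = 0 := by
      rw [real_inner_comm]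
      exact (hLK x).2 _ h2
    have h4 : w = L x + (w - L x) := by rw [add_comm, sub_add_cancel]
    calc ‖w‖ ^ 2 = ‖L x + (w - L x)‖ ^ 2 := by rw [← h4]
      _ = ‖L x‖ ^ 2 + 2 * ⟪L x, w - L x⟫ + ‖w - L x‖ ^ 2 := norm_add_sq_real _ _
      _ = ‖L x‖ ^ 2 + ‖w - L x‖ ^ 2 := by rw [h3]; ring
  have key : ∀ a b : ℝ, 0 ≤ a → 0 ≤ b → a ^ 2 ≤ b ^ 2 → a ≤ b := by
    intro a b ha hb h
    nlinarith
  refine ⟨L, hmain, huniq, ?_, ?_, ?_⟩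
  · intro x w hwW hwx
    have h := hdecomp x w hwW hwx
    refine key _ _ (norm_nonneg _) (norm_nonneg _) ?_
    have h2 : (0:ℝ) ≤ ‖w - L x‖ ^ 2 := sq_nonneg _
    linarith
  · intro x w hwW hwx hle
    have h := hdecomp x w hwW hwx
    have hle2 : ‖w‖ ^ 2 ≤ ‖L x‖ ^ 2 := pow_le_pow_left₀ (norm_nonneg _) hle 2
    have h0 : ‖w - L x‖ ^ 2 = 0 := le_antisymm (by linarith) (sq_nonneg _)
    have h1 : ‖w - L x‖ = 0 := by
      have := sq_nonneg ‖w - L x‖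
      nlinarith [norm_nonneg (w - L x)]
    exact sub_eq_zero.mp (norm_eq_zero.mp h1)
  · intro x hx
    have h0 : P.orthogonalProjectionOnto x = 0 :=
      Submodule.orthogonalProjectionOnto_apply_of_mem_orthogonal hx
    show K.subtype (e.symm ((P.orthogonalProjectionOnto) x)) = 0
    rw [h0, map_zero, map_zero]
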